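/- Let m ≥ 2, h > 0, and let g : [0,∞) → ℝ be continuously differentiable. For U ∈ ℝ^m let A(U) be the m×m tridiagonal matrix with entries a_{i,i+1} = a_{i+1,i} = g_i/h² where g_i = g((U_{i+1} − U_i)²/h²), a_{i,i} = −(g_{i−1} + g_i)/h² for 2 ≤ i ≤ m−1, a_{1,1} = −g_1/h², a_{m,m} = −g_{m−1}/h², and a_{i,j} = 0 otherwise, and define f : ℝ^m → ℝ^m by f(U) = A(U)·U. Then f is differentiable at every U, and its Jacobian matrix at U equals A(U) + C(U), where C(U) is the symmetric tridiagonal matrix with entries c_{i,i+1} = c_{i+1,i} = (2/h⁴)·g'_i·(U_{i+1} − U_i)² for i = 1,…,m−1, c_{i,i} = −(2/h⁴)·[g'_i·(U_{i+1} − U_i)² + g'_{i−1}·(U_i − U_{i−1})²] for i = 2,…,m−1, c_{1,1} = −(2/h⁴)·g'_1·(U_2 − U_1)², c_{m,m} = −(2/h⁴)·g'_{m−1}·(U_m − U_{m−1})², and c_{i,j} = 0 otherwise, with g'_i = g'((U_{i+1} − U_i)²/h²). -/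

import Mathlib

/-- The tridiagonal matrix `A(U)` of the 1-D semi-discretization (0-based
indices): `a_{i,i+1} = a_{i+1,i} = g_i/h²` with
`g_i = g((U_{i+1} − U_i)²/h²)`, diagonal entries
`a_{i,i} = −(g_{i−1} + g_i)/h²` (dropping `g_{i−1}` in the first row and `g_i`
in the last row, reflecting the Neumann boundary conditions), and `0` elsewhere. -/
noncomputable def diffMat (m : ℕ) (h : ℝ) (g : ℝ → ℝ) (U : Fin m → ℝ) :
    Matrix (Fin m) (Fin m) ℝ := fun i j =>
  let V : ℕ → ℝ := fun l => if hl : l < m then U ⟨l, hl⟩ else 0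
  let gg : ℕ → ℝ := fun l => g ((V (l + 1) - V l) ^ 2 / h ^ 2)
  if (j : ℕ) = (i : ℕ) + 1 then gg (i : ℕ) / h ^ 2
  else if (i : ℕ) = (j : ℕ) + 1 then gg (j : ℕ) / h ^ 2
  else if i = j then
    -(((if 0 < (i : ℕ) then gg ((i : ℕ) - 1) else 0) +
       (if (i : ℕ) + 1 < m then gg (i : ℕ) else 0)) / h ^ 2)
  else 0

/-- The symmetric tridiagonal matrix `C(U)` (0-based indices):
`c_{i,i+1} = c_{i+1,i} = (2/h⁴)·g'_i·(U_{i+1} − U_i)²` with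
`g'_i = g'((U_{i+1} − U_i)²/h²)`, diagonal entries
`c_{i,i} = −(2/h⁴)·[g'_{i−1}·(U_i − U_{i−1})² + g'_i·(U_{i+1} − U_i)²]`
(dropping the `i−1` term in the first row and the `i` term in the last row),
and `0` elsewhere. -/
noncomputable def jacC (m : ℕ) (h : ℝ) (g : ℝ → ℝ) (U : Fin m → ℝ) :
    Matrix (Fin m) (Fin m) ℝ := fun i j =>
  let V : ℕ → ℝ := fun l => if hl : l < m then U ⟨l, hl⟩ else 0
  let t : ℕ → ℝ := fun l => deriv g ((V (l + 1) - V l) ^ 2 / h ^ 2) * (V (l + 1) - V l) ^ 2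
  if (j : ℕ) = (i : ℕ) + 1 then 2 / h ^ 4 * t (i : ℕ)
  else if (i : ℕ) = (j : ℕ) + 1 then 2 / h ^ 4 * t (j : ℕ)
  else if i = j then
    -(2 / h ^ 4) * ((if 0 < (i : ℕ) then t ((i : ℕ) - 1) else 0) +
       (if (i : ℕ) + 1 < m then t (i : ℕ) else 0))
  else 0



section Aux

/-- Extension of a vector by zero. -/
noncomputable def extV (m : ℕ) (W : Fin m → ℝ) (l : ℕ) : ℝ :=
  if hl : l < m then W ⟨l, hl⟩ else 0

/-- Generic symmetric tridiagonal matrix with zero row sums (Neumann). -/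
noncomputable def triM (m : ℕ) (c : ℕ → ℝ) : Matrix (Fin m) (Fin m) ℝ := fun i j =>
  if (j : ℕ) = (i : ℕ) + 1 then c (i : ℕ)
  else if (i : ℕ) = (j : ℕ) + 1 then c (j : ℕ)
  else if i = j then
    -((if 0 < (i : ℕ) then c ((i : ℕ) - 1) else 0) +
      (if (i : ℕ) + 1 < m then c (i : ℕ) else 0))
  else 0

/-- Edge vector: +1 at k, −1 at k+1. -/
noncomputable def edgeV (m : ℕ) (k : ℕ) : Fin m → ℝ := fun i =>
  (if (i : ℕ) = k then 1 else 0) - (if (i : ℕ) = k + 1 then 1 else 0)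

/-- Difference functional as a continuous linear map. -/
noncomputable def deltaL (m : ℕ) (k : ℕ) : (Fin m → ℝ) →L[ℝ] ℝ :=
  (if hl : k + 1 < m then ContinuousLinearMap.proj (R := ℝ) (φ := fun _ : Fin m => ℝ) ⟨k + 1, hl⟩ else 0)
  - (if hl : k < m then ContinuousLinearMap.proj (R := ℝ) (φ := fun _ : Fin m => ℝ) ⟨k, hl⟩ else 0)

lemma deltaL_apply (m k : ℕ) (W : Fin m → ℝ) :
    deltaL m k W = extV m W (k + 1) - extV m W k := by
  unfold deltaL extV
  split_ifs <;> simp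

lemma edge_sum (m : ℕ) (a : ℕ → ℝ) (i : Fin m) :
    ∑ k ∈ Finset.range (m - 1), a k * edgeV m k i =
      (if (i : ℕ) + 1 < m then a (i : ℕ) else 0)
        - (if 0 < (i : ℕ) then a ((i : ℕ) - 1) else 0) := by
  unfold edgeV
  simp only [mul_sub, Finset.sum_sub_distrib, mul_ite, mul_one, mul_zero]
  congr 1
  · rw [Finset.sum_ite_eq (Finset.range (m-1)) (i : ℕ) a]
    have : (i : ℕ) ∈ Finset.range (m-1) ↔ (i : ℕ) + 1 < m := by
      rw [Finset.mem_range]; omega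
    split_ifs with h1 h2 h2 <;> first | rfl | (exfalso; rw [this] at h1; omega) <;> rfl
  · rcases Nat.eq_zero_or_pos (i : ℕ) with hi | hi
    · rw [if_neg (by omega)]
      apply Finset.sum_eq_zero
      intro k _
      rw [if_neg (by omega)]
    · rw [if_pos hi]
      have hmem : (i : ℕ) - 1 ∈ Finset.range (m - 1) := by
        rw [Finset.mem_range]; have := i.isLt; omega
      rw [Finset.sum_eq_single ((i:ℕ) - 1)]
      · rw [if_pos (by omega)]
      · intro k _ hk; rw [if_neg (by omega)]
      · intro hk; exact absurd hmem hk

lemma triM_mulVec (m : ℕ) (c : ℕ → ℝ) (V : Fin m → ℝ) (i : Fin m) :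
    (triM m c).mulVec V i =
      ∑ k ∈ Finset.range (m - 1), c k * (extV m V (k + 1) - extV m V k) * edgeV m k i := by
  rw [edge_sum m (fun k => c k * (extV m V (k + 1) - extV m V k)) i]
  have hsplit : ∀ j : Fin m, triM m c i j * V j =
      (if (j : ℕ) = (i : ℕ) + 1 then c (i : ℕ) * V j else 0)
      + (if (i : ℕ) = (j : ℕ) + 1 then c ((j : ℕ)) * V j else 0)
      + (if i = j then -((if 0 < (i : ℕ) then c ((i : ℕ) - 1) else 0) +
          (if (i : ℕ) + 1 < m then c (i : ℕ) else 0)) * V j else 0) := by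
    intro j
    unfold triM
    simp only [Fin.ext_iff]
    split_ifs <;> first | omega | ring
  unfold Matrix.mulVec dotProduct
  simp only [hsplit, Finset.sum_add_distrib]
  have h1 : ∑ j : Fin m, (if (j : ℕ) = (i : ℕ) + 1 then c (i : ℕ) * V j else 0)
      = if (i : ℕ) + 1 < m then c (i : ℕ) * extV m V ((i : ℕ) + 1) else 0 := by
    by_cases hb : (i : ℕ) + 1 < m
    · rw [if_pos hb]
      rw [Finset.sum_eq_single (⟨(i : ℕ) + 1, hb⟩ : Fin m)]
      · rw [if_pos rfl]
        unfold extV; rw [dif_pos hb]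
      · intro j _ hj; rw [if_neg (fun hc => hj (Fin.ext hc))]
      · intro hj; exact absurd (Finset.mem_univ _) hj
    · rw [if_neg hb]
      apply Finset.sum_eq_zero; intro j _
      rw [if_neg (by have := j.isLt; omega)]
  have h2 : ∑ j : Fin m, (if (i : ℕ) = (j : ℕ) + 1 then c ((j : ℕ)) * V j else 0)
      = if 0 < (i : ℕ) then c ((i : ℕ) - 1) * extV m V ((i : ℕ) - 1) else 0 := by
    by_cases hb : 0 < (i : ℕ)
    · rw [if_pos hb]
      have hlt : (i : ℕ) - 1 < m := by have := i.isLt; omega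
      rw [Finset.sum_eq_single (⟨(i : ℕ) - 1, hlt⟩ : Fin m)]
      · rw [if_pos (show (i:ℕ) = ((⟨(i:ℕ)-1, hlt⟩ : Fin m) : ℕ) + 1 by simp; omega)]
        unfold extV; rw [dif_pos hlt]
      · intro j _ hj
        rw [if_neg]
        intro hc
        apply hj
        apply Fin.ext
        show (j : ℕ) = (i : ℕ) - 1
        omega
      · intro hj; exact absurd (Finset.mem_univ _) hj
    · rw [if_neg hb]
      apply Finset.sum_eq_zero; intro j _
      rw [if_neg (by omega)]
  have h3 : ∑ j : Fin m, (if i = j then -((if 0 < (i : ℕ) then c ((i : ℕ) - 1) else 0) +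
        (if (i : ℕ) + 1 < m then c (i : ℕ) else 0)) * V j else 0)
      = -((if 0 < (i : ℕ) then c ((i : ℕ) - 1) else 0) +
        (if (i : ℕ) + 1 < m then c (i : ℕ) else 0)) * V i := by
    rw [Finset.sum_ite_eq Finset.univ i, if_pos (Finset.mem_univ i)]
  rw [h1, h2, h3]
  have hVi : extV m V (i : ℕ) = V i := by
    unfold extV; rw [dif_pos i.isLt]
  split_ifs with hA hB hB <;>
    · try rw [show (i : ℕ) - 1 + 1 = (i : ℕ) by omega]
      try simp only [hVi]
      ring

end Aux

section Main

lemma diffMat_eq_tri (m : ℕ) (h : ℝ) (g : ℝ → ℝ) (W : Fin m → ℝ) :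
    diffMat m h g W =
      triM m (fun k => g ((extV m W (k + 1) - extV m W k) ^ 2 / h ^ 2) / h ^ 2) := by
  funext i j
  simp only [diffMat, triM, extV]
  split_ifs <;> ring

lemma sumMat_eq_tri (m : ℕ) (h : ℝ) (g : ℝ → ℝ) (U : Fin m → ℝ) :
    diffMat m h g U + jacC m h g U =
      triM m (fun k =>
        g ((extV m U (k + 1) - extV m U k) ^ 2 / h ^ 2) / h ^ 2 +
        2 / h ^ 4 * (deriv g ((extV m U (k + 1) - extV m U k) ^ 2 / h ^ 2) *
          (extV m U (k + 1) - extV m U k) ^ 2)) := by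
  funext i j
  simp only [Matrix.add_apply, diffMat, jacC, triM, extV]
  split_ifs <;> ring

/-- For a `C¹` diffusivity `g`, the map `f(U) = A(U)·U` is
differentiable everywhere and its Jacobian (Fréchet derivative) at `U` is the
matrix `A(U) + C(U)`. -/
theorem stmt13 (m : ℕ) (hm : 2 ≤ m) (h : ℝ) (hh : 0 < h)
    (g : ℝ → ℝ) (hg : ContDiff ℝ 1 g) (U : Fin m → ℝ) :
    HasFDerivAt (fun W : Fin m → ℝ => (diffMat m h g W).mulVec W)
      (LinearMap.toContinuousLinearMap
        (diffMat m h g U + jacC m h g U).mulVecLin) U := by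
  have hne : h ≠ 0 := ne_of_gt hh
  have hfun : (fun W : Fin m → ℝ => (diffMat m h g W).mulVec W)
      = fun W => ∑ k ∈ Finset.range (m - 1),
          (g ((deltaL m k W) ^ 2 / h ^ 2) * (deltaL m k W) / h ^ 2) • edgeV m k := by
    funext W
    funext i
    rw [diffMat_eq_tri, triM_mulVec, Finset.sum_apply]
    apply Finset.sum_congr rfl
    intro k _
    rw [Pi.smul_apply, smul_eq_mul, deltaL_apply]
    ring
  rw [hfun]
  have hterm : ∀ k ∈ Finset.range (m - 1), HasFDerivAt
      (fun W : Fin m → ℝ =>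
        (g ((deltaL m k W) ^ 2 / h ^ 2) * (deltaL m k W) / h ^ 2) • edgeV m k)
      (ContinuousLinearMap.smulRight
        (((deriv g ((deltaL m k U) ^ 2 / h ^ 2) * (2 * (deltaL m k U) / h ^ 2) *
          (deltaL m k U) + g ((deltaL m k U) ^ 2 / h ^ 2) * 1) / h ^ 2) •
          deltaL m k)
        (edgeV m k)) U := by
    intro k _
    apply HasFDerivAt.smul_const
    have hδ : HasFDerivAt (fun W : Fin m → ℝ => deltaL m k W) (deltaL m k) U :=
      (deltaL m k).hasFDerivAt
    set d := deltaL m k U with hd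
    have hsq : HasDerivAt (fun s : ℝ => s ^ 2 / h ^ 2) (2 * d / h ^ 2) d := by
      have h2 := (hasDerivAt_pow 2 d).div_const (h ^ 2)
      rw [show (2:ℝ) * d / h ^ 2 = ((2:ℕ):ℝ) * d ^ (2 - 1) / h ^ 2 by push_cast; ring]
      exact h2
    have hgd : HasDerivAt g (deriv g (d ^ 2 / h ^ 2)) (d ^ 2 / h ^ 2) :=
      ((hg.differentiable one_ne_zero) _).hasDerivAt
    have hcomp : HasDerivAt (fun s : ℝ => g (s ^ 2 / h ^ 2))
        (deriv g (d ^ 2 / h ^ 2) * (2 * d / h ^ 2)) d := hgd.comp d hsq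
    have hmul : HasDerivAt (fun s : ℝ => g (s ^ 2 / h ^ 2) * s)
        (deriv g (d ^ 2 / h ^ 2) * (2 * d / h ^ 2) * d + g (d ^ 2 / h ^ 2) * 1) d :=
      hcomp.mul (hasDerivAt_id d)
    have hφ := hmul.div_const (h ^ 2)
    exact HasDerivAt.comp_hasFDerivAt U hφ hδ
  have hsum := HasFDerivAt.fun_sum hterm
  have heq : (∑ k ∈ Finset.range (m - 1),
      ContinuousLinearMap.smulRight
        (((deriv g ((deltaL m k U) ^ 2 / h ^ 2) * (2 * (deltaL m k U) / h ^ 2) *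
          (deltaL m k U) + g ((deltaL m k U) ^ 2 / h ^ 2) * 1) / h ^ 2) •
          deltaL m k)
        (edgeV m k))
      = LinearMap.toContinuousLinearMap (diffMat m h g U + jacC m h g U).mulVecLin := by
    apply ContinuousLinearMap.ext
    intro V
    have hRHS : (LinearMap.toContinuousLinearMap
        (diffMat m h g U + jacC m h g U).mulVecLin) V
        = (diffMat m h g U + jacC m h g U).mulVec V := by
      simp [Matrix.mulVecLin_apply, Matrix.add_mulVec]
    rw [hRHS, sumMat_eq_tri m h g U]
    funext i
    rw [triM_mulVec]
    simp only [ContinuousLinearMap.coe_sum', Finset.sum_apply,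
      ContinuousLinearMap.smulRight_apply, ContinuousLinearMap.coe_smul',
      Pi.smul_apply, smul_eq_mul]
    apply Finset.sum_congr rfl
    intro k _
    rw [deltaL_apply, deltaL_apply]
    field_simp
    ring
  rw [← heq]
  exact hsum

end Main
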